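/- Let A, Y, B be a partition of a straight cone T = C(S) ⊆ ℝᴺ with vertex 0, where A and B are disjoint open cones and Y = Ā ∩ B̄ is a closed subcone. For c > 0 and α > 1 define the horn neighborhood U_W^{c,α} = {x ∈ ℝᴺ : d(x, W) < c‖x‖^α} of a cone W. Then U_T^{c,α} = U_A^{c,α} ∪ U_B^{c,α}, and the tangent cone at 0 of U_A^{c,α} is Ā, of U_B^{c,α} is B̄, and the tangent cone at 0 of the closed set U̅_A^{c,α} ∩ U̅_B^{c,α} is contained in Ā ∩ B̄ = Y. -/

import Mathlib

open Set Filter Topology Metric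

noncomputable section

def seqTangentConeAtZero {E : Type*} [NormedAddCommGroup E] [NormedSpace ℝ E]
    (A : Set E) : Set E :=
  {v | ∃ (a : ℕ → E) (t : ℕ → ℝ), (∀ n, a n ∈ A) ∧ Tendsto a atTop (nhds 0) ∧
    (∀ n, 0 < t n) ∧ Tendsto t atTop (nhds 0) ∧
    Tendsto (fun n => (t n)⁻¹ • a n) atTop (nhds v)}

/-- A straight cone with vertex 0: invariant under multiplication by positive scalars. -/
def IsStraightCone {E : Type*} [NormedAddCommGroup E] [NormedSpace ℝ E] (W : Set E) : Prop :=
  ∀ x ∈ W, ∀ t : ℝ, 0 < t → t • x ∈ W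

/-- The horn neighborhood U_W^{c,α} = {x : d(x,W) < c‖x‖^α}. -/
def horn {N : ℕ} (W : Set (EuclideanSpace ℝ (Fin N))) (c α : ℝ) :
    Set (EuclideanSpace ℝ (Fin N)) :=
  {x | infDist x W < c * ‖x‖ ^ α}

/- ---------- auxiliary lemmas ---------- -/

lemma seqTangent_mono {E : Type*} [NormedAddCommGroup E] [NormedSpace ℝ E]
    {S₁ S₂ : Set E} (h : S₁ ⊆ S₂) :
    seqTangentConeAtZero S₁ ⊆ seqTangentConeAtZero S₂ := by
  rintro v ⟨a, t, h1, h2, h3, h4, h5⟩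
  exact ⟨a, t, fun n => h (h1 n), h2, h3, h4, h5⟩

lemma zero_mem_closure_of_cone {E : Type*} [NormedAddCommGroup E] [NormedSpace ℝ E]
    {W : Set E} (hW : IsStraightCone W) (hne : W.Nonempty) : (0 : E) ∈ closure W := by
  obtain ⟨a, ha⟩ := hne
  refine mem_closure_iff_seq_limit.mpr ⟨fun n => (1 / (n + 1 : ℝ)) • a, fun n => hW a ha _ (by positivity), ?_⟩
  have := (tendsto_one_div_add_atTop_nhds_zero_nat (𝕜 := ℝ)).smul_const a
  simpa using this

lemma infDist_smul_le {E : Type*} [NormedAddCommGroup E] [NormedSpace ℝ E]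
    {W : Set E} (hW : IsStraightCone W) (hne : W.Nonempty)
    {s : ℝ} (hs : 0 < s) (x : E) : infDist (s • x) W ≤ s * infDist x W := by
  refine le_of_forall_pos_le_add fun ε hε => ?_
  have h1 : infDist x W < infDist x W + ε / s := lt_add_of_pos_right _ (by positivity)
  obtain ⟨a, haW, hd⟩ := (infDist_lt_iff hne).mp h1
  calc infDist (s • x) W ≤ dist (s • x) (s • a) := infDist_le_dist_of_mem (hW a haW s hs)
    _ = s * dist x a := by rw [dist_smul₀, Real.norm_eq_abs, abs_of_pos hs]
    _ ≤ s * (infDist x W + ε / s) := by nlinarith [dist_nonneg (x := x) (y := a)]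
    _ = s * infDist x W + ε := by rw [mul_add, mul_div_cancel₀ _ hs.ne']

lemma closure_horn_subset {N : ℕ} {W : Set (EuclideanSpace ℝ (Fin N))} {c α : ℝ}
    (hα : 0 < α) :
    closure (horn W c α) ⊆ {x | infDist x W ≤ c * ‖x‖ ^ α} := by
  have hcl : IsClosed {x : EuclideanSpace ℝ (Fin N) | infDist x W ≤ c * ‖x‖ ^ α} :=
    isClosed_le (continuous_infDist_pt W)
      (continuous_const.mul (continuous_norm.rpow_const fun _ => Or.inr hα.le))
  exact hcl.closure_subset_iff.mpr fun y hy => show infDist y W ≤ c * ‖y‖ ^ α from le_of_lt hy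

lemma tangent_closure_horn_subset {N : ℕ} {W : Set (EuclideanSpace ℝ (Fin N))}
    (hW : IsStraightCone W) (hne : W.Nonempty) {c α : ℝ} (hc : 0 < c) (hα : 1 < α) :
    seqTangentConeAtZero (closure (horn W c α)) ⊆ closure W := by
  rintro v ⟨a, t, ha, ha0, ht, ht0, hlim⟩
  have hαpos : (0 : ℝ) < α := lt_trans one_pos hα
  -- bound the scaled distance
  have hbound : ∀ n, infDist ((t n)⁻¹ • a n) W ≤ c * ‖a n‖ ^ (α - 1) * ‖(t n)⁻¹ • a n‖ := by
    intro n
    have h1 : infDist ((t n)⁻¹ • a n) W ≤ (t n)⁻¹ * infDist (a n) W :=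
      infDist_smul_le hW hne (inv_pos.mpr (ht n)) _
    have h2 : infDist (a n) W ≤ c * ‖a n‖ ^ α := closure_horn_subset hαpos (ha n)
    have hsplit : ‖a n‖ ^ α = ‖a n‖ ^ (α - 1) * ‖a n‖ := by
      have := Real.rpow_add' (norm_nonneg (a n)) (y := α - 1) (z := 1) (by simpa using hαpos.ne')
      simpa [Real.rpow_one] using this
    have hnorm : ‖(t n)⁻¹ • a n‖ = (t n)⁻¹ * ‖a n‖ := by
      rw [norm_smul, Real.norm_eq_abs, abs_of_pos (inv_pos.mpr (ht n))]
    calc infDist ((t n)⁻¹ • a n) W ≤ (t n)⁻¹ * infDist (a n) W := h1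
      _ ≤ (t n)⁻¹ * (c * ‖a n‖ ^ α) := by
          have := inv_pos.mpr (ht n); nlinarith
      _ = c * ‖a n‖ ^ (α - 1) * ((t n)⁻¹ * ‖a n‖) := by rw [hsplit]; ring
      _ = c * ‖a n‖ ^ (α - 1) * ‖(t n)⁻¹ • a n‖ := by rw [hnorm]
  -- the bound tends to 0
  have hna : Tendsto (fun n => ‖a n‖) atTop (nhds 0) := by simpa using ha0.norm
  have hnp : Tendsto (fun n => ‖a n‖ ^ (α - 1)) atTop (nhds 0) := by
    have hcont : ContinuousAt (fun x : ℝ => x ^ (α - 1)) 0 :=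
      Real.continuousAt_rpow_const 0 (α - 1) (Or.inr (by linarith))
    have := hcont.tendsto.comp hna
    simpa [Function.comp_def, Real.zero_rpow (by linarith : α - 1 ≠ 0)] using this
  have hnq : Tendsto (fun n => ‖(t n)⁻¹ • a n‖) atTop (nhds ‖v‖) := hlim.norm
  have hg : Tendsto (fun n => c * ‖a n‖ ^ (α - 1) * ‖(t n)⁻¹ • a n‖) atTop (nhds 0) := by
    have := ((tendsto_const_nhds (x := c)).mul hnp).mul hnq
    simpa using this
  have hsq : Tendsto (fun n => infDist ((t n)⁻¹ • a n) W) atTop (nhds 0) :=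
    squeeze_zero (fun n => infDist_nonneg) hbound hg
  have hcont : Tendsto (fun n => infDist ((t n)⁻¹ • a n) W) atTop (nhds (infDist v W)) :=
    ((continuous_infDist_pt W).tendsto v).comp hlim
  have h0 : infDist v W = 0 := tendsto_nhds_unique hcont hsq
  exact (mem_closure_iff_infDist_zero hne).mpr h0

lemma closure_subset_tangent_horn {N : ℕ} {W : Set (EuclideanSpace ℝ (Fin N))}
    (hW : IsStraightCone W) (h0 : (0 : EuclideanSpace ℝ (Fin N)) ∉ W)
    {c α : ℝ} (hc : 0 < c) :
    closure W ⊆ seqTangentConeAtZero (horn W c α) := by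
  intro v hv
  obtain ⟨u, hu, hulim⟩ := mem_closure_iff_seq_limit.mp hv
  have hWhorn : W ⊆ horn W c α := by
    intro x hx
    have hx0 : x ≠ 0 := fun h => h0 (h ▸ hx)
    have hnx : 0 < ‖x‖ := norm_pos_iff.mpr hx0
    have : infDist x W = 0 := infDist_zero_of_mem hx
    simp only [horn, mem_setOf_eq, this]
    positivity
  refine ⟨fun n => (1 / (n + 1 : ℝ)) • u n, fun n => 1 / (n + 1 : ℝ),
    fun n => hWhorn (hW (u n) (hu n) _ (by positivity)), ?_, fun n => by positivity,
    tendsto_one_div_add_atTop_nhds_zero_nat, ?_⟩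
  · have := (tendsto_one_div_add_atTop_nhds_zero_nat (𝕜 := ℝ)).smul hulim
    simpa using this
  · have heq : ∀ n : ℕ, (1 / (n + 1 : ℝ))⁻¹ • ((1 / (n + 1 : ℝ)) • u n) = u n := by
      intro n
      rw [smul_smul, inv_mul_cancel₀ (by positivity), one_smul]
    exact Filter.Tendsto.congr (fun n => (heq n).symm) hulim

theorem stmt11 (N : ℕ) (T A B Y : Set (EuclideanSpace ℝ (Fin N)))
    (hT : IsStraightCone T) (hA : IsStraightCone A) (hB : IsStraightCone B)
    (hY : IsStraightCone Y)
    (hAne : A.Nonempty) (hBne : B.Nonempty)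
    (hpart : T = A ∪ Y ∪ B) (hABdisj : Disjoint A B)
    (hAYdisj : Disjoint A Y) (hBYdisj : Disjoint B Y)
    (hAopen : ∃ O, IsOpen O ∧ A = T ∩ O) (hBopen : ∃ O, IsOpen O ∧ B = T ∩ O)
    (hYcl : IsClosed Y) (hYeq : Y = closure A ∩ closure B)
    (c α : ℝ) (hc : 0 < c) (hα : 1 < α) :
    horn T c α = horn A c α ∪ horn B c α ∧
    seqTangentConeAtZero (horn A c α) = closure A ∧
    seqTangentConeAtZero (horn B c α) = closure B ∧
    seqTangentConeAtZero (closure (horn A c α) ∩ closure (horn B c α)) ⊆ Y := by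
  have h0A : (0 : EuclideanSpace ℝ (Fin N)) ∈ closure A := zero_mem_closure_of_cone hA hAne
  have h0B : (0 : EuclideanSpace ℝ (Fin N)) ∈ closure B := zero_mem_closure_of_cone hB hBne
  have h0Y : (0 : EuclideanSpace ℝ (Fin N)) ∈ Y := hYeq ▸ ⟨h0A, h0B⟩
  have h0nA : (0 : EuclideanSpace ℝ (Fin N)) ∉ A := fun h =>
    (hAYdisj.ne_of_mem h h0Y) rfl
  have h0nB : (0 : EuclideanSpace ℝ (Fin N)) ∉ B := fun h =>
    (hBYdisj.ne_of_mem h h0Y) rfl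
  have hAT : A ⊆ T := hpart ▸ fun x hx => Or.inl (Or.inl hx)
  have hBT : B ⊆ T := hpart ▸ fun x hx => Or.inr hx
  have hTne : T.Nonempty := hAne.mono hAT
  -- the distance to T is the min of distances to A and B
  have hdT : ∀ x, infDist x T = min (infDist x A) (infDist x B) := by
    intro x
    refine le_antisymm (le_min (infDist_le_infDist_of_subset hAT hAne)
      (infDist_le_infDist_of_subset hBT hBne)) ?_
    by_contra hlt
    push_neg at hlt
    obtain ⟨y, hyT, hdy⟩ := (infDist_lt_iff hTne).mp hlt
    rw [hpart] at hyT
    rcases hyT with (hy | hy) | hy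
    · exact absurd hdy (not_lt.mpr ((min_le_left _ _).trans (infDist_le_dist_of_mem hy)))
    · have hyA : y ∈ closure A := (hYeq ▸ hy).1
      have : infDist x A ≤ dist x y := by
        rw [← infDist_closure]; exact infDist_le_dist_of_mem hyA
      exact absurd hdy (not_lt.mpr ((min_le_left _ _).trans this))
    · exact absurd hdy (not_lt.mpr ((min_le_right _ _).trans (infDist_le_dist_of_mem hy)))
  -- Part 1
  have part1 : horn T c α = horn A c α ∪ horn B c α := by
    ext x
    simp only [horn, mem_setOf_eq, mem_union, hdT x, min_lt_iff]
  -- Parts 2 and 3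
  have tangA : seqTangentConeAtZero (horn A c α) = closure A := by
    refine le_antisymm ?_ (closure_subset_tangent_horn hA h0nA hc)
    exact (seqTangent_mono subset_closure).trans (tangent_closure_horn_subset hA hAne hc hα)
  have tangB : seqTangentConeAtZero (horn B c α) = closure B := by
    refine le_antisymm ?_ (closure_subset_tangent_horn hB h0nB hc)
    exact (seqTangent_mono subset_closure).trans (tangent_closure_horn_subset hB hBne hc hα)
  refine ⟨part1, tangA, tangB, ?_⟩
  intro v hv
  rw [hYeq]
  exact ⟨tangent_closure_horn_subset hA hAne hc hα (seqTangent_mono inter_subset_left hv),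
    tangent_closure_horn_subset hB hBne hc hα (seqTangent_mono inter_subset_right hv)⟩

end
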